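/- Let T be a triangulated category with a t-structure that is left bounded locally coherent Grothendieck. Then every bounded homotopically finitely presented object of T is compact: hfp^b(T) ⊆ T^c. -/

import Mathlib

/-!
STATEMENT 16: Let `T` be a triangulated category with a t-structure that is left
bounded locally coherent Grothendieck.  Then every bounded homotopically
finitely presented object of `T` is compact: `hfp^b(T) ⊆ T^c`.

The truncation functors `τ_{≤n}`, `τ_{≥n}` of the t-structure are given as data
with the truncation triangles; `Fp` is the predicate "finitely presented in the
heart" (defined on heart objects); the relevant axiom of a left bounded locally
coherent Grothendieck t-structure, `fp(T^♥) ⊆ T^c`, is a hypothesis.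
-/

open CategoryTheory Limits Pretriangulated Triangulated
open scoped Classical

namespace Stmt16


/-- Compactness: the corepresented additive functor preserves coproducts. -/
def IsCompactObj {D : Type*} [Category D] [Preadditive D] (X : D) : Prop :=
  ∀ J : Type, Nonempty
    (PreservesColimitsOfShape (Discrete J) (preadditiveCoyoneda.obj (Opposite.op X)))


section CompactDefs

variable {D : Type*} [Category D] [Preadditive D]

def postcompHom {X A B : D} (g : A ⟶ B) : (X ⟶ A) →+ (X ⟶ B) :=
  AddMonoidHom.mk' (fun f => f ≫ g) fun a b => by simp

def precompHom {X Y A : D} (φ : X ⟶ Y) : (Y ⟶ A) →+ (X ⟶ A) :=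
  AddMonoidHom.mk' (fun f => φ ≫ f) fun a b => by simp

variable {J : Type} {F : Discrete J ⥤ D}

noncomputable def theta (X : D) (c : Cocone F) :
    (Π₀ j : J, (X ⟶ F.obj ⟨j⟩)) →+ (X ⟶ c.pt) :=
  DFinsupp.sumAddHom fun j => postcompHom (c.ι.app ⟨j⟩)

lemma theta_single (X : D) (c : Cocone F) (j : J) (b : X ⟶ F.obj ⟨j⟩) :
    theta X c (DFinsupp.single j b) = b ≫ c.ι.app ⟨j⟩ :=
  DFinsupp.sumAddHom_single _ _ _

noncomputable def pull (F : Discrete J ⥤ D) {X Y : D} (φ : X ⟶ Y) :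
    (Π₀ j : J, (Y ⟶ F.obj ⟨j⟩)) →+ (Π₀ j : J, (X ⟶ F.obj ⟨j⟩)) :=
  DFinsupp.mapRange.addMonoidHom fun _ => precompHom φ

lemma pull_apply {X Y : D} (φ : X ⟶ Y) (s : Π₀ j : J, (Y ⟶ F.obj ⟨j⟩)) (j : J) :
    pull F φ s j = φ ≫ s j := by
  simp [pull, precompHom]

lemma pull_single {X Y : D} (φ : X ⟶ Y) (j : J) (b : Y ⟶ F.obj ⟨j⟩) :
    pull F φ (DFinsupp.single j b) =
      (DFinsupp.single j (φ ≫ b) : Π₀ j : J, (X ⟶ F.obj ⟨j⟩)) := by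
  simp [pull, precompHom]

lemma theta_pull (c : Cocone F) {X Y : D} (φ : X ⟶ Y) (s : Π₀ j : J, (Y ⟶ F.obj ⟨j⟩)) :
    theta X c (pull F φ s) = φ ≫ theta Y c s := by
  have h : (theta X c).comp (pull F φ) = (precompHom (A := c.pt) φ).comp (theta Y c) := by
    refine DFinsupp.addHom_ext fun j b => ?_
    simp [pull_single, theta_single, precompHom]
  exact DFunLike.congr_fun h s

/-- compactness as bijectivity of the canonical map `⊕ Hom(X, F j) → Hom(X, colim F)`. -/
def CompactBij (X : D) : Prop :=
  ∀ (J : Type) (F : Discrete J ⥤ D) (c : Cocone F), IsColimit c →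
    Function.Bijective ⇑(theta X c)

end CompactDefs





section Grp
universe w

variable {J : Type} {K : Discrete J ⥤ AddCommGrpCat.{w}}

/-- the canonical cocone map as an `AddMonoidHom` -/
noncomputable def Phi (tc : Cocone K) : (Π₀ j : J, K.obj ⟨j⟩) →+ tc.pt :=
  DFinsupp.sumAddHom fun j => (tc.ι.app ⟨j⟩).hom

lemma Phi_single (tc : Cocone K) (j : J) (x : K.obj ⟨j⟩) :
    Phi tc (DFinsupp.single j x) = (tc.ι.app ⟨j⟩).hom x :=
  DFinsupp.sumAddHom_single _ _ _

noncomputable def isColimitOfPhiBijective (tc : Cocone K) (h : Function.Bijective (Phi tc)) :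
    IsColimit tc where
  desc s := AddCommGrpCat.ofHom ((Phi s).comp (AddEquiv.ofBijective (Phi tc) h).symm.toAddMonoidHom)
  fac s := by
    rintro ⟨j⟩
    refine AddCommGrpCat.hom_ext (AddMonoidHom.ext fun x => ?_)
    show (Phi s) ((AddEquiv.ofBijective (Phi tc) h).symm
      ((tc.ι.app ⟨j⟩).hom x)) = (s.ι.app ⟨j⟩).hom x
    rw [← Phi_single tc j x]
    have h0 : ∀ y, (AddEquiv.ofBijective (Phi tc) h) y = Phi tc y := fun _ => rfl
    have h2 : (AddEquiv.ofBijective (Phi tc) h).symm (Phi tc (DFinsupp.single j x))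
        = DFinsupp.single j x := by
      rw [← h0]; exact (AddEquiv.ofBijective (Phi tc) h).symm_apply_apply _
    rw [h2, Phi_single]
  uniq s m hm := by
    refine AddCommGrpCat.hom_ext (AddMonoidHom.ext fun x => ?_)
    obtain ⟨y, rfl⟩ := h.2 x
    have h0 : ∀ z, (AddEquiv.ofBijective (Phi tc) h) z = Phi tc z := fun _ => rfl
    have h2 : (AddEquiv.ofBijective (Phi tc) h).symm (Phi tc y) = y := by
      rw [← h0]; exact (AddEquiv.ofBijective (Phi tc) h).symm_apply_apply _
    show m.hom (Phi tc y)
        = (Phi s) ((AddEquiv.ofBijective (Phi tc) h).symm (Phi tc y))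
    rw [h2]
    have hcomp : m.hom.comp (Phi tc) = Phi s := by
      refine DFinsupp.addHom_ext fun j x => ?_
      rw [AddMonoidHom.comp_apply, Phi_single, Phi_single]
      have hm' : m.hom.comp (tc.ι.app ⟨j⟩).hom
          = (s.ι.app ⟨j⟩).hom := congrArg (fun f => f.hom) (hm ⟨j⟩)
      exact DFunLike.congr_fun hm' x
    exact DFunLike.congr_fun hcomp y

/-- the direct sum cocone -/
noncomputable def sigmaCocone (K : Discrete J ⥤ AddCommGrpCat.{w}) : Cocone K where
  pt := AddCommGrpCat.of (Π₀ j : J, K.obj ⟨j⟩)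
  ι := Discrete.natTrans fun j =>
    AddCommGrpCat.ofHom (DFinsupp.singleAddHom (fun j : J => K.obj ⟨j⟩) j.as)

lemma Phi_sigmaCocone (s : Π₀ j : J, K.obj ⟨j⟩) : Phi (sigmaCocone K) s = s := by
  have h : Phi (sigmaCocone K) = AddMonoidHom.id _ := by
    refine DFinsupp.addHom_ext fun j x => ?_
    rw [Phi_single]
    rfl
  rw [h]; rfl

lemma phi_bijective_of_isColimit (tc : Cocone K) (htc : IsColimit tc) :
    Function.Bijective (Phi tc) := by
  have hsigbij : Function.Bijective (Phi (sigmaCocone K)) := by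
    have : ⇑(Phi (sigmaCocone K)) = id := funext Phi_sigmaCocone
    rw [this]; exact Function.bijective_id
  have hsig : IsColimit (sigmaCocone K) := isColimitOfPhiBijective _ hsigbij
  set e := hsig.coconePointUniqueUpToIso htc with he
  have key : ∀ s, Phi tc s = e.hom.hom (Phi (sigmaCocone K) s) := by
    have h : e.hom.hom.comp (Phi (sigmaCocone K)) = Phi tc := by
      refine DFinsupp.addHom_ext fun j x => ?_
      rw [AddMonoidHom.comp_apply, Phi_single, Phi_single]
      have h2 : e.hom.hom.comp
          ((sigmaCocone K).ι.app ⟨j⟩).hom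
          = (tc.ι.app ⟨j⟩).hom :=
        congrArg (fun f => f.hom) (hsig.comp_coconePointUniqueUpToIso_hom htc ⟨j⟩)
      exact DFunLike.congr_fun h2 x
    intro s
    exact (DFunLike.congr_fun h s).symm
  have hb : Function.Bijective e.hom.hom :=
    ConcreteCategory.bijective_of_isIso e.hom
  have h : ⇑(Phi tc) = ⇑e.hom.hom ∘ ⇑(Phi (sigmaCocone K)) :=
    funext key
  rw [h]
  exact hb.comp hsigbij


end Grp

section Bridge

variable {D : Type*} [Category D] [Preadditive D]

lemma isCompactObj_iff_compactBij (X : D) : IsCompactObj X ↔ CompactBij X := by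
  constructor
  · intro hX J F c hc
    have : PreservesColimitsOfShape (Discrete J) (preadditiveCoyoneda.obj (Opposite.op X)) :=
      (hX J).some
    have hb := phi_bijective_of_isColimit _
      (isColimitOfPreserves (preadditiveCoyoneda.obj (Opposite.op X)) hc)
    exact hb
  · intro hX J
    refine ⟨⟨fun {F} => ⟨fun {c} hc => ⟨isColimitOfPhiBijective _ ?_⟩⟩⟩⟩
    exact hX J F c hc

end Bridge



section Closure

variable {D : Type*} [Category D] [Preadditive D]

lemma compactBij_of_isZero {X : D} (hX : IsZero X) : CompactBij X := by
  intro J F c _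
  constructor
  · intro s s' _
    ext j
    exact hX.eq_of_src _ _
  · intro f
    exact ⟨0, hX.eq_of_src _ _⟩

lemma compactBij_of_iso {X Y : D} (e : X ≅ Y) (hX : CompactBij X) : CompactBij Y := by
  intro J F c hc
  have hX' := hX J F c hc
  constructor
  · intro s s' hss
    have h1 : theta X c (pull F e.hom s) = theta X c (pull F e.hom s') := by
      rw [theta_pull, theta_pull, hss]
    have h2 := hX'.1 h1
    ext j
    have h3 := DFunLike.congr_fun h2 j
    rw [pull_apply, pull_apply] at h3
    calc s j = e.inv ≫ (e.hom ≫ s j) := by simp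
    _ = e.inv ≫ (e.hom ≫ s' j) := by rw [h3]
    _ = s' j := by simp
  · intro f
    obtain ⟨s, hs⟩ := hX'.2 (e.hom ≫ f)
    refine ⟨pull F e.inv s, ?_⟩
    rw [theta_pull, hs]
    simp

section Shift

variable [HasShift D ℤ] [∀ n : ℤ, (shiftFunctor D n).Additive]

noncomputable def shiftHomEquiv (n : ℤ) (X A : D) :
    ((X⟦n⟧ : D) ⟶ A) ≃+ (X ⟶ (A⟦(-n : ℤ)⟧ : D)) :=
  AddEquiv.mk' ((shiftEquiv D n).toAdjunction.homEquiv X A) (by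
    intro f g
    erw [Adjunction.homEquiv_unit, Adjunction.homEquiv_unit, Adjunction.homEquiv_unit]
    exact (congrArg (fun h => (shiftEquiv D n).toAdjunction.unit.app X ≫ h)
      ((shiftFunctor D (-n)).map_add (f := f) (g := g))).trans (Preadditive.comp_add _ _ _ _ _ _))

lemma shiftHomEquiv_naturality (n : ℤ) (X A B : D) (f : (X⟦n⟧ : D) ⟶ A) (k : A ⟶ B) :
    shiftHomEquiv n X B (f ≫ k) = shiftHomEquiv n X A f ≫ (shiftFunctor D (-n)).map k := by
  exact Adjunction.homEquiv_naturality_right _ _ _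

lemma compactBij_shift {X : D} (n : ℤ) (hX : CompactBij X) : CompactBij ((X⟦n⟧ : D)) := by
  intro J F c hc
  have hc' := isColimitOfPreserves (shiftFunctor D (-n)) hc
  have hX' := hX J (F ⋙ shiftFunctor D (-n)) ((shiftFunctor D (-n)).mapCocone c) hc'
  set σ := fun (A : D) => shiftHomEquiv n X A with hσ
  have key : ∀ s : Π₀ j : J, ((X⟦n⟧ : D) ⟶ F.obj ⟨j⟩),
      σ c.pt (theta (X⟦n⟧) c s)
        = theta X ((shiftFunctor D (-n)).mapCocone c)
            (DFinsupp.mapRange (fun j g => σ (F.obj ⟨j⟩) g) (fun _ => map_zero _) s) := by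
    have hcomp : ((σ c.pt).toAddMonoidHom).comp (theta (X⟦n⟧) c)
        = (theta X ((shiftFunctor D (-n)).mapCocone c)).comp
            (DFinsupp.mapRange.addMonoidHom (fun j => (σ (F.obj ⟨j⟩)).toAddMonoidHom)) := by
      refine DFinsupp.addHom_ext fun j b => ?_
      show (σ c.pt) (theta (X⟦n⟧) c (DFinsupp.single j b))
          = theta X ((shiftFunctor D (-n)).mapCocone c)
              (DFinsupp.mapRange (fun i x => (σ (F.obj ⟨i⟩)).toAddMonoidHom x)
                (fun i => ((σ (F.obj ⟨i⟩)).toAddMonoidHom).map_zero) (DFinsupp.single j b))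
      rw [theta_single, DFinsupp.mapRange_single, theta_single]
      exact shiftHomEquiv_naturality n X _ _ b (c.ι.app ⟨j⟩)
    intro s
    exact DFunLike.congr_fun hcomp s
  constructor
  · intro s s' hss
    have h1 := congrArg (σ c.pt) hss
    rw [key, key] at h1
    have h2 := hX'.1 h1
    ext j
    have h3 := DFunLike.congr_fun h2 j
    rw [DFinsupp.mapRange_apply, DFinsupp.mapRange_apply] at h3
    exact (σ (F.obj ⟨j⟩)).injective h3
  · intro g
    obtain ⟨t, ht⟩ := hX'.2 (σ c.pt g)
    refine ⟨DFinsupp.mapRange (fun j g => (σ (F.obj ⟨j⟩)).symm g) (fun _ => map_zero _) t, ?_⟩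
    apply (σ c.pt).injective
    rw [key, ← ht]
    congr 1
    ext j
    rw [DFinsupp.mapRange_apply, DFinsupp.mapRange_apply]
    exact (σ (F.obj ⟨j⟩)).apply_symm_apply _

end Shift

section Ext

open Pretriangulated

variable [HasShift D ℤ] [HasZeroObject D] [∀ n : ℤ, (shiftFunctor D n).Additive]
  [Pretriangulated D]

lemma exists_pull_eq {J : Type} {F : Discrete J ⥤ D} {Y Z : D} (v : Y ⟶ Z)
    (s : Π₀ j : J, (Y ⟶ F.obj ⟨j⟩))
    (h : ∀ j, ∃ k : Z ⟶ F.obj ⟨j⟩, s j = v ≫ k) :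
    ∃ t : Π₀ j : J, (Z ⟶ F.obj ⟨j⟩), s = pull F v t := by
  choose k hk using h
  refine ⟨DFinsupp.mk s.support (fun j => k j), ?_⟩
  ext j
  rw [pull_apply]
  by_cases hj : j ∈ s.support
  · rw [DFinsupp.mk_apply, dif_pos hj]
    exact hk j
  · rw [DFinsupp.mk_apply, dif_neg hj]
    have h0 : s j = 0 := DFinsupp.notMem_support_iff.1 hj
    rw [h0, comp_zero]

lemma compactBij_ext {A B C' : D} {u : A ⟶ B} {v : B ⟶ C'} {w : C' ⟶ (A⟦(1:ℤ)⟧ : D)}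
    (hT : Triangle.mk u v w ∈ distTriang D)
    (hA : CompactBij A) (hC : CompactBij C') : CompactBij B := by
  intro J F c hc
  have hA1 := compactBij_shift (D := D) 1 hA J F c hc
  have hC1 := compactBij_shift (D := D) (-1 : ℤ) hC J F c hc
  have hAb := hA J F c hc
  have hCb := hC J F c hc
  have hTinv : (Triangle.mk u v w).invRotate ∈ distTriang D :=
    inv_rot_of_distTriang _ hT
  have hvw : v ≫ w = 0 := comp_distTriang_mor_zero₂₃ _ hT
  obtain ⟨q, hqu, hexactA⟩ : ∃ q : (C'⟦(-1:ℤ)⟧ : D) ⟶ A, q ≫ u = 0 ∧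
      ∀ (X : D) (f : A ⟶ X), q ≫ f = 0 → ∃ g : B ⟶ X, f = u ≫ g := by
    refine ⟨(Triangle.mk u v w).invRotate.mor₁, comp_distTriang_mor_zero₁₂ _ hTinv, ?_⟩
    intro X f hf
    obtain ⟨g, hg⟩ := Triangle.yoneda_exact₂ _ hTinv f hf
    exact ⟨g, hg⟩
  have hexactB : ∀ (X : D) (f : B ⟶ X), u ≫ f = 0 → ∃ g : C' ⟶ X, f = v ≫ g := by
    intro X f hf
    obtain ⟨g, hg⟩ := Triangle.yoneda_exact₂ _ hT f hf
    exact ⟨g, hg⟩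
  have hexactC : ∀ (X : D) (f : C' ⟶ X), v ≫ f = 0 →
      ∃ g : (A⟦(1:ℤ)⟧ : D) ⟶ X, f = w ≫ g := by
    intro X f hf
    obtain ⟨g, hg⟩ := Triangle.yoneda_exact₂ _ (rot_of_distTriang _ hT) f hf
    exact ⟨g, hg⟩
  constructor
  · refine (injective_iff_map_eq_zero _).2 ?_
    intro s hs
    have h1 : theta A c (pull F u s) = 0 := by rw [theta_pull, hs, comp_zero]
    have h2 : pull F u s = 0 := (injective_iff_map_eq_zero _).1 hAb.1 _ h1
    have h3 : ∀ j, u ≫ s j = 0 := fun j => by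
      have h := DFunLike.congr_fun h2 j
      rw [pull_apply] at h
      simpa using h
    obtain ⟨t, ht⟩ := exists_pull_eq v s (fun j => hexactB _ (s j) (h3 j))
    have h5 : v ≫ theta C' c t = 0 := by rw [← theta_pull, ← ht]; exact hs
    obtain ⟨h, hh⟩ := hexactC _ (theta C' c t) h5
    obtain ⟨m, hm⟩ := hA1.2 h
    have h6 : theta C' c (pull F w m) = theta C' c t := by rw [theta_pull, hm, hh]
    have h7 : pull F w m = t := hCb.1 h6
    ext j
    have h8 := DFunLike.congr_fun ht j
    rw [pull_apply, ← h7, pull_apply, ← Category.assoc, hvw, zero_comp] at h8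
    simpa using h8
  · intro f
    obtain ⟨s₁, hs₁⟩ := hAb.2 (u ≫ f)
    have h1 : theta (C'⟦(-1:ℤ)⟧) c (pull F q s₁) = 0 := by
      rw [theta_pull, hs₁, ← Category.assoc, hqu, zero_comp]
    have h2 : pull F q s₁ = 0 := (injective_iff_map_eq_zero _).1 hC1.1 _ h1
    have h3 : ∀ j, q ≫ s₁ j = 0 := fun j => by
      have h := DFunLike.congr_fun h2 j
      rw [pull_apply] at h
      simpa using h
    obtain ⟨s₂, hs₂⟩ := exists_pull_eq u s₁ (fun j => hexactA _ (s₁ j) (h3 j))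
    have h4 : u ≫ (f - theta B c s₂) = 0 := by
      rw [Preadditive.comp_sub, ← theta_pull, ← hs₂, hs₁, sub_self]
    obtain ⟨g', hg'⟩ := hexactB _ (f - theta B c s₂) h4
    obtain ⟨s₃, hs₃⟩ := hCb.2 g'
    refine ⟨pull F v s₃ + s₂, ?_⟩
    rw [map_add, theta_pull, hs₃, ← hg']
    exact sub_add_cancel f (theta B c s₂)

end Ext

end Closure

section TStr

open Pretriangulated Triangulated

variable {T : Type*} [Category T] [Preadditive T] [HasZeroObject T] [HasShift T ℤ]
  [∀ n : ℤ, (shiftFunctor T n).Additive] [Pretriangulated T]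
  (t : TStructure T) (τle τge : ℤ → T ⥤ T)
  (hle : ∀ (i : ℤ) (X : T), t.le i ((τle i).obj X))
  (hge : ∀ (i : ℤ) (X : T), t.ge i ((τge i).obj X))
  (η : ∀ i : ℤ, τle i ⟶ 𝟭 T) (ε : ∀ i : ℤ, 𝟭 T ⟶ τge i)
  (htri : ∀ (i : ℤ) (X : T), ∃ d : (τge (i + 1)).obj X ⟶ ((τle i).obj X)⟦(1 : ℤ)⟧,
    Triangle.mk ((η i).app X) ((ε (i + 1)).app X) d ∈ distTriang T)

include t τle τge hle hge η ε htri

set_option linter.unusedSectionVars false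

lemma homZero {X Y : T} (f : X ⟶ Y) {a b : ℤ} (hab : a < b)
    (hX : t.le a X) (hY : t.ge b Y) : f = 0 := by
  have h0 : t.le 0 ((X⟦a⟧ : T)) := t.le_shift a a 0 (by omega) X hX
  have h1 : t.ge (b - a) ((Y⟦a⟧ : T)) := t.ge_shift b a (b - a) (by omega) Y hY
  have h2 : t.ge 1 ((Y⟦a⟧ : T)) := t.ge_antitone (by omega : (1:ℤ) ≤ b - a) _ h1
  have h3 := t.zero' ((shiftFunctor T a).map f) h0 h2
  apply (shiftFunctor T a).map_injective
  rw [h3, Functor.map_zero]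

lemma isZero_τle {n : ℤ} {X : T} (hX : t.ge (n + 1) X) : IsZero ((τle n).obj X) := by
  obtain ⟨d, hd⟩ := htri n X
  have h1 : (η n).app X = 0 := homZero t τle τge hle hge η ε htri _ (lt_add_one n) (hle n X) hX
  have hinv := inv_rot_of_distTriang _ hd
  obtain ⟨g, hg⟩ := Triangle.coyoneda_exact₂ _ hinv (𝟙 ((τle n).obj X)) (by
    dsimp
    refine (Category.id_comp _).trans ?_
    exact h1)
  have hg0 : g = 0 := homZero t τle τge hle hge η ε htri g (show n < n + 2 by omega) (hle n X)
    (t.ge_shift (n+1) (-1) (n+2) (by omega) _ (hge (n+1) X))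
  rw [hg0, zero_comp] at hg
  exact (IsZero.iff_id_eq_zero _).mpr hg

lemma isZero_τge {n : ℤ} {X : T} (hX : t.le n X) : IsZero ((τge (n + 1)).obj X) := by
  obtain ⟨d, hd⟩ := htri n X
  have h1 : (ε (n+1)).app X = 0 := homZero t τle τge hle hge η ε htri _ (lt_add_one n) hX (hge (n+1) X)
  obtain ⟨g, hg⟩ := Triangle.yoneda_exact₃ _ hd (𝟙 ((τge (n+1)).obj X)) (by
    dsimp
    refine (Category.comp_id _).trans ?_
    exact h1)
  have hg0 : g = 0 := homZero t τle τge hle hge η ε htri g (show n - 1 < n + 1 by omega)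
    (t.le_shift n 1 (n-1) (by omega) _ (hle n X)) (hge (n+1) X)
  rw [hg0, comp_zero] at hg
  exact (IsZero.iff_id_eq_zero _).mpr hg

lemma isIso_ε {n : ℤ} {X : T} (hX : t.ge n X) : IsIso ((ε n).app X) := by
  obtain ⟨d, hd⟩ := htri (n-1) X
  have hz : IsZero ((τle (n-1)).obj X) := isZero_τle t τle τge hle hge η ε htri (by
    rw [show n - 1 + 1 = n by ring]
    exact hX)
  have h := (Triangle.isZero₁_iff_isIso₂ _ hd).1 hz
  have h' : IsIso ((ε (n-1+1)).app X) := h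
  rwa [show n - 1 + 1 = n by ring] at h'

lemma ge_ext' (n : ℤ) {Tr : Triangle T} (hTr : Tr ∈ distTriang T)
    (h1 : t.ge n Tr.obj₁) (h3 : t.ge n Tr.obj₃) : t.ge n Tr.obj₂ := by
  obtain ⟨m, rfl⟩ : ∃ m, n = m + 1 := ⟨n - 1, by omega⟩
  obtain ⟨d, hd⟩ := htri m Tr.obj₂
  have hφc : (η m).app Tr.obj₂ ≫ Tr.mor₂ = 0 :=
    homZero t τle τge hle hge η ε htri _ (lt_add_one m) (hle m _) h3
  obtain ⟨g, hg⟩ := Triangle.coyoneda_exact₂ _ hTr ((η m).app Tr.obj₂) hφc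
  have hg0 : g = 0 := homZero t τle τge hle hge η ε htri g (lt_add_one m) (hle m _) h1
  have hφ : (η m).app Tr.obj₂ = 0 := by rw [hg, hg0, zero_comp]
  have hzero : IsZero ((τle m).obj Tr.obj₂) := by
    have hinv := inv_rot_of_distTriang _ hd
    obtain ⟨g', hg'⟩ := Triangle.coyoneda_exact₂ _ hinv (𝟙 ((τle m).obj Tr.obj₂)) (by
      dsimp
      refine (Category.id_comp _).trans ?_
      exact hφ)
    have hg'0 : g' = 0 := homZero t τle τge hle hge η ε htri g' (show m < m + 2 by omega) (hle m _)
      (t.ge_shift (m+1) (-1) (m+2) (by omega) _ (hge (m+1) _))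
    rw [hg'0, zero_comp] at hg'
    exact (IsZero.iff_id_eq_zero _).mpr hg'
  have hiso : IsIso ((ε (m+1)).app Tr.obj₂) := (Triangle.isZero₁_iff_isIso₂ _ hd).1 hzero
  exact (ObjectProperty.prop_iff_of_iso (t.ge (m+1)) (asIso ((ε (m+1)).app Tr.obj₂))).2 (hge (m+1) _)

lemma homBij {m : ℤ} {Tr : Triangle T} (hTr : Tr ∈ distTriang T)
    (h1 : t.le m Tr.obj₁) {W : T} (hW : t.ge (m+1) W) :
    Function.Bijective (fun φ : Tr.obj₃ ⟶ W => Tr.mor₂ ≫ φ) := by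
  constructor
  · intro φ φ' hφφ
    have hφ' : Tr.mor₂ ≫ φ = Tr.mor₂ ≫ φ' := hφφ
    have h : Tr.mor₂ ≫ (φ - φ') = 0 := by
      rw [Preadditive.comp_sub, hφ', sub_self]
    obtain ⟨g, hg⟩ := Triangle.yoneda_exact₃ _ hTr (φ - φ') h
    have hg0 : g = 0 := homZero t τle τge hle hge η ε htri g (show m - 1 < m + 1 by omega)
      (t.le_shift m 1 (m-1) (by omega) _ h1) hW
    rw [hg0, comp_zero] at hg
    exact sub_eq_zero.1 hg
  · intro f
    obtain ⟨g, hg⟩ := Triangle.yoneda_exact₂ _ hTr f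
      (homZero t τle τge hle hge η ε htri _ (lt_add_one m) h1 hW)
    exact ⟨g, hg.symm⟩

lemma tgeComp (a' m : ℤ) (ham : a' + 1 ≤ m + 1) (X : T) :
    Nonempty ((τge (m+1)).obj X ≅ (τge (m+1)).obj ((τge (a'+1)).obj X)) := by
  obtain ⟨dX, hdX⟩ := htri m X
  obtain ⟨dY, hdY⟩ := htri m ((τge (a'+1)).obj X)
  obtain ⟨dA, hdA⟩ := htri a' X
  have B1 : ∀ {W : T}, t.ge (m+1) W → Function.Bijective
      (fun φ : (τge (m+1)).obj X ⟶ W => (ε (m+1)).app X ≫ φ) :=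
    fun hW => homBij t τle τge hle hge η ε htri hdX (hle m X) hW
  have B2 : ∀ {W : T}, t.ge (m+1) W → Function.Bijective
      (fun φ : (τge (m+1)).obj ((τge (a'+1)).obj X) ⟶ W =>
        (ε (m+1)).app ((τge (a'+1)).obj X) ≫ φ) :=
    fun hW => homBij t τle τge hle hge η ε htri hdY (hle m _) hW
  have B3 : ∀ {W : T}, t.ge (m+1) W → Function.Bijective
      (fun φ : (τge (a'+1)).obj X ⟶ W => (ε (a'+1)).app X ≫ φ) :=
    fun hW => homBij t τle τge hle hge η ε htri hdA (hle a' X)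
      (t.ge_antitone (by omega : a' + 1 ≤ m + 1) _ hW)
  obtain ⟨θ, hθ0⟩ := (B1 (hge (m+1) ((τge (a'+1)).obj X))).2
    ((ε (a'+1)).app X ≫ (ε (m+1)).app ((τge (a'+1)).obj X))
  have hθ : (ε (m+1)).app X ≫ θ
      = (ε (a'+1)).app X ≫ (ε (m+1)).app ((τge (a'+1)).obj X) := hθ0
  have Tθbij : ∀ {W : T}, t.ge (m+1) W → Function.Bijective
      (fun φ : (τge (m+1)).obj ((τge (a'+1)).obj X) ⟶ W => θ ≫ φ) := by
    intro W hW
    constructor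
    · intro φ φ' hφφ
      have h1 : θ ≫ φ = θ ≫ φ' := hφφ
      have h2 : (ε (a'+1)).app X ≫ ((ε (m+1)).app ((τge (a'+1)).obj X) ≫ φ)
          = (ε (a'+1)).app X ≫ ((ε (m+1)).app ((τge (a'+1)).obj X) ≫ φ') := by
        rw [← Category.assoc, ← hθ, ← Category.assoc, ← hθ,
          Category.assoc, Category.assoc, h1]
      exact (B2 hW).1 ((B3 hW).1 h2)
    · intro ρ
      obtain ⟨κ, hκ0⟩ := (B3 hW).2 ((ε (m+1)).app X ≫ ρ)
      have hκ : (ε (a'+1)).app X ≫ κ = (ε (m+1)).app X ≫ ρ := hκ0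
      obtain ⟨φ, hφ0⟩ := (B2 hW).2 κ
      have hφ : (ε (m+1)).app ((τge (a'+1)).obj X) ≫ φ = κ := hφ0
      refine ⟨φ, (B1 hW).1 ?_⟩
      show (ε (m+1)).app X ≫ θ ≫ φ = (ε (m+1)).app X ≫ ρ
      rw [← Category.assoc, hθ, Category.assoc, hφ, hκ]
  obtain ⟨ψ, hψ0⟩ := (Tθbij (hge (m+1) X)).2 (𝟙 _)
  have hψ : θ ≫ ψ = 𝟙 _ := hψ0
  have hψθ : ψ ≫ θ = 𝟙 _ := by
    apply (Tθbij (hge (m+1) ((τge (a'+1)).obj X))).1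
    show θ ≫ ψ ≫ θ = θ ≫ 𝟙 _
    rw [← Category.assoc, hψ, Category.id_comp, Category.comp_id]
  exact ⟨⟨θ, ψ, hψ, hψθ⟩⟩

lemma main_ind (Fp : T → Prop)
    (hFp_iso : ∀ X Y : T, (X ≅ Y) → Fp X → Fp Y)
    (hfp_compact' : ∀ Y : T, t.le 0 Y → t.ge 0 Y → Fp Y → CompactBij Y) :
    ∀ (k : ℕ) (a : ℤ) (X : T), t.ge a X → IsZero ((τge (a + (k : ℤ))).obj X) →
      (∀ n : ℤ, Fp (((τle n).obj ((τge n).obj X))⟦n⟧)) → CompactBij X := by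
  intro k
  induction k with
  | zero =>
    intro a X hXa hz hFp
    haveI hε : IsIso ((ε a).app X) := isIso_ε t τle τge hle hge η ε htri hXa
    have hz' : IsZero ((τge a).obj X) := by
      rwa [show a + ((0:ℕ):ℤ) = a by simp] at hz
    exact compactBij_of_isZero (IsZero.of_iso hz' (asIso ((ε a).app X)))
  | succ k ih =>
    intro a X hXa hz hFp
    obtain ⟨d, hd⟩ := htri a X
    -- the compact piece τ≤a X
    have hC_ge : t.ge a ((τle a).obj X) := by
      have h := ge_ext' t τle τge hle hge η ε htri a (inv_rot_of_distTriang _ hd)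
        (by
          dsimp
          exact t.ge_antitone (by omega : a ≤ a + 2) _
            (t.ge_shift (a+1) (-1) (a+2) (by omega) _ (hge (a+1) X)))
        (by dsimp; exact hXa)
      dsimp at h
      exact h
    haveI hε : IsIso ((ε a).app X) := isIso_ε t τle τge hle hge η ε htri hXa
    have eC : (τle a).obj ((τge a).obj X) ≅ (τle a).obj X :=
      (τle a).mapIso (asIso ((ε a).app X)).symm
    have hFpC : Fp (((τle a).obj X)⟦a⟧) :=
      hFp_iso _ _ ((shiftFunctor T a).mapIso eC) (hFp a)
    have hCshift : CompactBij ((((τle a).obj X)⟦a⟧ : T)) :=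
      hfp_compact' _ (t.le_shift a a 0 (by omega) _ (hle a X))
        (t.ge_shift a a 0 (by omega) _ hC_ge) hFpC
    have hC_compact : CompactBij ((τle a).obj X) := by
      have h1 := compactBij_shift (-a) hCshift
      exact compactBij_of_iso ((shiftEquiv T a).unitIso.symm.app ((τle a).obj X)) h1
    -- the top piece τ≥(a+1) X, compact by induction
    have e1 : a + ((k+1:ℕ):ℤ) = (a + (k:ℤ)) + 1 := by push_cast; ring
    rw [e1] at hz
    have hzG : IsZero ((τge ((a+1) + (k:ℤ))).obj ((τge (a+1)).obj X)) := by
      obtain ⟨e⟩ := tgeComp t τle τge hle hge η ε htri a (a + (k:ℤ)) (by omega) X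
      have h2 : IsZero ((τge (a + (k:ℤ) + 1)).obj ((τge (a+1)).obj X)) :=
        IsZero.of_iso hz e.symm
      rwa [show a + (k:ℤ) + 1 = (a+1) + (k:ℤ) by ring] at h2
    have hFpG : ∀ n : ℤ, Fp (((τle n).obj ((τge n).obj ((τge (a+1)).obj X)))⟦n⟧) := by
      intro n
      by_cases hn : a + 1 ≤ n
      · obtain ⟨e⟩ := tgeComp t τle τge hle hge η ε htri a (n-1) (by omega) X
        rw [show n - 1 + 1 = n by ring] at e
        exact hFp_iso _ _ ((shiftFunctor T n).mapIso ((τle n).mapIso e)) (hFp n)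
      · push_neg at hn
        have hG'ge : t.ge (a+1) ((τge (a+1)).obj X) := hge _ _
        have hGn : t.ge n ((τge (a+1)).obj X) := t.ge_antitone (by omega) _ hG'ge
        haveI : IsIso ((ε n).app ((τge (a+1)).obj X)) :=
          isIso_ε t τle τge hle hge η ε htri hGn
        have hτ : t.ge (n+1) ((τge n).obj ((τge (a+1)).obj X)) :=
          (ObjectProperty.prop_iff_of_iso (t.ge (n+1))
            (asIso ((ε n).app ((τge (a+1)).obj X)))).1
            (t.ge_antitone (by omega : n + 1 ≤ a + 1) _ hG'ge)
        have hz3 : IsZero (((τle n).obj ((τge n).obj ((τge (a+1)).obj X)))⟦n⟧) :=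
          Functor.map_isZero _ (isZero_τle t τle τge hle hge η ε htri hτ)
        have hXze : t.ge ((a-1)+1) ((τge (a-1)).obj X) := by
          have h4 : t.ge (a-1) X := t.ge_antitone (by omega) _ hXa
          haveI hiso2 : IsIso ((ε (a-1)).app X) :=
            isIso_ε t τle τge hle hge η ε htri h4
          refine (ObjectProperty.prop_iff_of_iso (t.ge (a-1+1)) (asIso ((ε (a-1)).app X))).1 ?_
          rw [show a - 1 + 1 = a by ring]
          exact hXa
        have hz4 : IsZero (((τle (a-1)).obj ((τge (a-1)).obj X))⟦(a-1 : ℤ)⟧) :=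
          Functor.map_isZero _ (isZero_τle t τle τge hle hge η ε htri hXze)
        exact hFp_iso _ _ (hz4.isoZero.trans hz3.isoZero.symm) (hFp (a-1))
    have hG_compact : CompactBij ((τge (a+1)).obj X) :=
      ih (a+1) ((τge (a+1)).obj X) (hge (a+1) X) hzG hFpG
    exact compactBij_ext hd hC_compact hG_compact

end TStr


theorem stmt16 {T : Type*} [Category T]
    [Preadditive T] [HasZeroObject T] [HasShift T ℤ]
    [∀ n : ℤ, (shiftFunctor T n).Additive] [Pretriangulated T]
    (t : TStructure T)
    -- the t-structure is left bounded
    (hlb : ∀ X : T, ∃ n : ℕ, t.ge (-(n : ℤ)) X)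
    -- truncation data for `t`
    (τle τge : ℤ → T ⥤ T)
    (hle : ∀ (i : ℤ) (X : T), t.le i ((τle i).obj X))
    (hge : ∀ (i : ℤ) (X : T), t.ge i ((τge i).obj X))
    (η : ∀ i : ℤ, τle i ⟶ 𝟭 T) (ε : ∀ i : ℤ, 𝟭 T ⟶ τge i)
    (htri : ∀ (i : ℤ) (X : T), ∃ d : (τge (i + 1)).obj X ⟶ ((τle i).obj X)⟦(1 : ℤ)⟧,
      Triangle.mk ((η i).app X) ((ε (i + 1)).app X) d ∈ distTriang T)
    -- "finitely presented in the heart", closed under isomorphisms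
    (Fp : T → Prop)
    (hFp_iso : ∀ X Y : T, (X ≅ Y) → Fp X → Fp Y)
    -- the axiom `fp(T^♥) ⊆ T^c` of a left bounded locally coherent Grothendieck
    -- t-structure
    (hfp_compact : ∀ Y : T, t.le 0 Y → t.ge 0 Y → Fp Y → IsCompactObj Y) :
    -- every bounded object all of whose t-cohomologies `Hⁿ_t` are finitely
    -- presented in the heart is compact
    ∀ X : T,
      (∃ M : ℕ, IsZero ((τle (-(M : ℤ) - 1)).obj X) ∧
        IsZero ((τge ((M : ℤ) + 1)).obj X)) →
      (∀ n : ℤ, Fp (((τle n).obj ((τge n).obj X))⟦n⟧)) →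
      IsCompactObj X := by
  intro X hbound hFp
  obtain ⟨M, hM1, hM2⟩ := hbound
  obtain ⟨d, hd⟩ := htri (-(M : ℤ) - 1) X
  haveI hiso : IsIso ((ε (-(M : ℤ) - 1 + 1)).app X) :=
    (Pretriangulated.Triangle.isZero₁_iff_isIso₂ _ hd).1 hM1
  have hgeX : t.ge (-(M : ℤ) - 1 + 1) X :=
    (ObjectProperty.prop_iff_of_iso (t.ge (-(M : ℤ) - 1 + 1))
      (asIso ((ε (-(M : ℤ) - 1 + 1)).app X))).2 (hge _ _)
  rw [show -(M : ℤ) - 1 + 1 = -(M : ℤ) by ring] at hgeX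
  have hz : IsZero ((τge (-(M : ℤ) + ((2 * M + 1 : ℕ) : ℤ))).obj X) := by
    rw [show (-(M : ℤ) + ((2 * M + 1 : ℕ) : ℤ)) = (M : ℤ) + 1 by push_cast; ring]
    exact hM2
  have hcb : CompactBij X :=
    main_ind t τle τge hle hge η ε htri Fp hFp_iso
      (fun Y h1 h2 h3 => (isCompactObj_iff_compactBij Y).1 (hfp_compact Y h1 h2 h3))
      (2 * M + 1) (-(M : ℤ)) X hgeX hz hFp
  exact (isCompactObj_iff_compactBij X).2 hcb

end Stmt16
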